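/- Let n ≥ 10 and T ≥ 2. Let a₁ = B_{1,1}/n, a₂ = B_{n,1}/n with B = ((1/n²)·I_n + A)^{-1}, and set C = 12/a₂, c₁ = C(a₂ - a₁)/2, c₂ = C(a₂ - a₁)/8. Define f̄(x,z;ȳ) = -Ψ(1)Φ(x₁) + Σ_{i=2}^{T}[Ψ(-z_i)Φ(-x_i) - Ψ(z_i)Φ(x_i)] + Σ_{i=1}^{T-1} h(x_i, z_{i+1}; ȳ^{(i)}) + Σ_{i=1}^{T-1}[c₁·x_i² + c₂·z_{i+1}²] for x ∈ ℝ^T, z = (z₂,…,z_T) ∈ ℝ^{T-1}, ȳ = (ȳ^{(1)},…,ȳ^{(T-1)}) ∈ ℝ^{n(T-1)}. Then for all (x,z), the supremum of f̄(x,z;ȳ) over ȳ ∈ ℝ^{n(T-1)} is attained and equals f̄_m(x,z) = -Ψ(1)Φ(x₁) + Σ_{i=2}^{T}[Ψ(-z_i)Φ(-x_i) - Ψ(z_i)Φ(x_i)] + 6·Σ_{i=1}^{T-1}(x_i - (1/2)·z_{i+1})². -/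

import Mathlib

open Matrix

/-- `Ψ(x) = 0` for `x ≤ 1/2`, `exp(1 - 1/(2x-1)²)` for `x > 1/2`. -/
noncomputable def Psi (x : ℝ) : ℝ :=
  if x ≤ 1 / 2 then 0 else Real.exp (1 - 1 / (2 * x - 1) ^ 2)

/-- `Φ(x) = √e · ∫_{-∞}^x e^{-t²/2} dt`. -/
noncomputable def Phi (x : ℝ) : ℝ :=
  Real.sqrt (Real.exp 1) * ∫ t in Set.Iic x, Real.exp (-t ^ 2 / 2)

/-- The `n × n` tridiagonal matrix with `A 1 1 = A n n = 1`, diagonal `2` otherwise,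
off-diagonal entries `-1`, and all other entries `0` (0-indexed in Lean). -/
noncomputable def triA (n : ℕ) : Matrix (Fin n) (Fin n) ℝ :=
  Matrix.of fun i j =>
    if i = j then (if (i : ℕ) = 0 ∨ (i : ℕ) = n - 1 then 1 else 2)
    else if (i : ℕ) + 1 = (j : ℕ) ∨ (j : ℕ) + 1 = (i : ℕ) then -1 else 0

/-- `B = (α I + A)⁻¹`. -/
noncomputable def Bmat (n : ℕ) (α : ℝ) : Matrix (Fin n) (Fin n) ℝ :=
  (α • (1 : Matrix (Fin n) (Fin n) ℝ) + triA n)⁻¹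

/-- `h(x, z; y) = -(1/2)·Σ_{i=1}^{n-1} (yᵢ - yᵢ₊₁)² - (1/(2n²))·‖y‖₂²
    + √(C/n)·(x y₁ - (1/2) z yₙ)`. -/
noncomputable def hfun (n : ℕ) (hn : 0 < n) (C x z : ℝ) (y : Fin n → ℝ) : ℝ :=
  -(1 / 2) * (∑ i : Fin n, if h : (i : ℕ) + 1 < n then (y i - y ⟨(i : ℕ) + 1, h⟩) ^ 2 else 0)
    - (1 / (2 * (n : ℝ) ^ 2)) * ∑ i : Fin n, (y i) ^ 2
    + Real.sqrt (C / n) * (x * y ⟨0, hn⟩ - (1 / 2) * z * y ⟨n - 1, by omega⟩)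

/-- The unscaled deterministic hard instance `f̄^{nc-sc}(x, z; ȳ)`.
In Lean's 0-indexing, `x j` is the math variable `x_{j+1}` and `z j` is `z_{j+2}`. -/
noncomputable def fbar (n T : ℕ) (hn : 0 < n) (hT : 2 ≤ T) (C c1 c2 : ℝ)
    (x : Fin T → ℝ) (z : Fin (T - 1) → ℝ) (ybar : Fin (T - 1) → Fin n → ℝ) : ℝ :=
  -Psi 1 * Phi (x ⟨0, by omega⟩)
    + ∑ j : Fin (T - 1),
        (Psi (-z j) * Phi (-x ⟨(j : ℕ) + 1, by have := j.isLt; omega⟩)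
          - Psi (z j) * Phi (x ⟨(j : ℕ) + 1, by have := j.isLt; omega⟩))
    + ∑ j : Fin (T - 1), hfun n hn C (x ⟨(j : ℕ), by have := j.isLt; omega⟩) (z j) (ybar j)
    + ∑ j : Fin (T - 1), (c1 * (x ⟨(j : ℕ), by have := j.isLt; omega⟩) ^ 2 + c2 * (z j) ^ 2)

lemma triA_mulVec {n : ℕ} (v : Fin n → ℝ) (j : Fin n) :
    (triA n *ᵥ v) j =
      (if (j : ℕ) = 0 ∨ (j : ℕ) = n - 1 then (1:ℝ) else 2) * v j
        - (if h : (j : ℕ) + 1 < n then v ⟨(j : ℕ) + 1, h⟩ else 0)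
        - (if h : 0 < (j : ℕ) then v ⟨(j : ℕ) - 1, lt_of_le_of_lt (Nat.sub_le _ _) j.isLt⟩ else 0) := by
  have key : ∀ i : Fin n, triA n j i * v i =
      (if i = j then ((if (j : ℕ) = 0 ∨ (j : ℕ) = n - 1 then (1:ℝ) else 2) * v i) else 0)
      + (if (j : ℕ) + 1 = (i : ℕ) then -v i else 0)
      + (if (i : ℕ) + 1 = (j : ℕ) then -v i else 0) := by
    intro i
    simp only [triA, Matrix.of_apply, Fin.ext_iff]
    split_ifs <;> first | ring1 | omega | (exfalso; omega)
  have S1 : ∑ i : Fin n, (if i = j then ((if (j:ℕ)=0 ∨ (j:ℕ)=n-1 then (1:ℝ) else 2) * v i) else 0)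
      = (if (j:ℕ)=0 ∨ (j:ℕ)=n-1 then (1:ℝ) else 2) * v j := by
    rw [Finset.sum_ite_eq' Finset.univ j]; simp
  have S2 : ∑ i : Fin n, (if (j:ℕ)+1 = (i:ℕ) then -v i else 0)
      = -(if h : (j:ℕ)+1 < n then v ⟨(j:ℕ)+1, h⟩ else 0) := by
    by_cases hj : (j:ℕ)+1 < n
    · rw [dif_pos hj]
      have e : ∀ i : Fin n, ((j:ℕ)+1 = (i:ℕ)) = (i = ⟨(j:ℕ)+1, hj⟩) := by
        intro i; apply propext
        constructor
        · intro h; exact Fin.ext h.symm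
        · intro h; subst h; rfl
      simp only [e]
      rw [Finset.sum_ite_eq' Finset.univ]; simp
    · rw [dif_neg hj, neg_zero]
      exact Finset.sum_eq_zero (fun i _ => by rw [if_neg (by have := i.isLt; omega)])
  have S3 : ∑ i : Fin n, (if (i:ℕ)+1 = (j:ℕ) then -v i else 0)
      = -(if h : 0 < (j:ℕ) then v ⟨(j:ℕ)-1, lt_of_le_of_lt (Nat.sub_le _ _) j.isLt⟩ else 0) := by
    by_cases hj : 0 < (j:ℕ)
    · rw [dif_pos hj]
      have e : ∀ i : Fin n, ((i:ℕ)+1 = (j:ℕ)) = (i = ⟨(j:ℕ)-1, lt_of_le_of_lt (Nat.sub_le _ _) j.isLt⟩) := by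
        intro i; apply propext
        constructor
        · intro h; exact Fin.ext (show (i:ℕ) = (j:ℕ)-1 by omega)
        · intro h; subst h; show (j:ℕ)-1+1 = (j:ℕ); omega
      simp only [e]
      rw [Finset.sum_ite_eq' Finset.univ]; simp
    · rw [dif_neg hj, neg_zero]
      exact Finset.sum_eq_zero (fun i _ => by rw [if_neg (by omega)])
  show (∑ i : Fin n, triA n j i * v i) = _
  simp only [key, Finset.sum_add_distrib, S1, S2, S3]
  ring


lemma triA_quadform {n : ℕ} (hn : 2 ≤ n) (v : Fin n → ℝ) :
    v ⬝ᵥ (triA n *ᵥ v) =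
      ∑ i : Fin n, (if h : (i:ℕ)+1 < n then (v i - v ⟨(i:ℕ)+1, h⟩)^2 else 0) := by
  obtain ⟨m, rfl⟩ : ∃ m, n = m + 1 := ⟨n-1, by omega⟩
  have hm : 1 ≤ m := by omega
  set V : ℕ → ℝ := fun k => if h : k < m+1 then v ⟨k, h⟩ else 0 with hV
  have hVval : ∀ i : Fin (m+1), v i = V (i:ℕ) := by
    intro i; rw [hV]; simp [i.isLt]
  have hL : v ⬝ᵥ (triA (m+1) *ᵥ v) =
      ∑ k ∈ Finset.range (m+1),
        (V k * ((if k = 0 ∨ k = m then 1 else 2) * V k - V (k+1)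
          - (if 0 < k then V (k-1) else 0))) := by
    rw [dotProduct]
    rw [← Fin.sum_univ_eq_sum_range (fun k =>
      (V k * ((if k = 0 ∨ k = m then 1 else 2) * V k - V (k+1)
          - (if 0 < k then V (k-1) else 0)))) (m+1)]
    apply Finset.sum_congr rfl
    intro i _
    rw [triA_mulVec]
    have e2 : (if h : (i:ℕ)+1 < m+1 then v ⟨(i:ℕ)+1, h⟩ else 0) = V ((i:ℕ)+1) := by
      by_cases h : (i:ℕ)+1 < m+1
      · rw [dif_pos h, hV]; simp [Nat.lt_of_succ_lt_succ h]
      · rw [dif_neg h, hV]; simp [h]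
    have e3 : (if h : 0 < (i:ℕ) then v ⟨(i:ℕ)-1, lt_of_le_of_lt (Nat.sub_le _ _) i.isLt⟩ else 0)
        = (if 0 < (i:ℕ) then V ((i:ℕ)-1) else 0) := by
      by_cases h : 0 < (i:ℕ)
      · rw [dif_pos h, if_pos h, hV]
        simp [lt_of_le_of_lt (Nat.sub_le (i:ℕ) 1) i.isLt]
      · rw [dif_neg h, if_neg h]
    rw [e2, e3, hVval i]
    simp only [Nat.add_sub_cancel]
  have hR : (∑ i : Fin (m+1), (if h : (i:ℕ)+1 < m+1 then (v i - v ⟨(i:ℕ)+1, h⟩)^2 else 0)) =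
      ∑ k ∈ Finset.range m, (V k - V (k+1))^2 := by
    have step : (∑ i : Fin (m+1), (if h : (i:ℕ)+1 < m+1 then (v i - v ⟨(i:ℕ)+1, h⟩)^2 else 0))
        = ∑ k ∈ Finset.range (m+1), (if k < m then (V k - V (k+1))^2 else 0) := by
      rw [← Fin.sum_univ_eq_sum_range (fun k => if k < m then (V k - V (k+1))^2 else 0) (m+1)]
      apply Finset.sum_congr rfl
      intro i _
      by_cases h : (i:ℕ) < m
      · rw [dif_pos (by omega), if_pos h, hVval i, hV]
        have h2 : (i:ℕ)+1 < m+1 := by omega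
        simp [h2]
      · rw [dif_neg (by omega), if_neg h]
    rw [step, Finset.sum_range_succ, if_neg (lt_irrefl m), add_zero]
    exact Finset.sum_congr rfl (fun k hk => if_pos (Finset.mem_range.mp hk))
  rw [hL, hR]
  set T := ∑ k ∈ Finset.range (m+1), V k^2 with hT
  set P := ∑ k ∈ Finset.range m, V k * V (k+1) with hP
  have hVm1 : V (m+1) = 0 := by rw [hV]; simp
  have h1 : ∑ k ∈ Finset.range (m+1), (if k=0 ∨ k=m then (1:ℝ) else 2) * V k^2
      = 2*T - V 0^2 - V m^2 := by
    have pw : ∀ k ∈ Finset.range (m+1), (if k=0 ∨ k=m then (1:ℝ) else 2) * V k^2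
        = 2*V k^2 - (if k = 0 then V k^2 else 0) - (if k = m then V k^2 else 0) := by
      intro k _
      by_cases h0 : k = 0
      · subst h0; rw [if_pos (Or.inl rfl), if_pos rfl, if_neg (by omega)]; ring
      · by_cases h1 : k = m
        · subst h1; rw [if_pos (Or.inr rfl), if_neg h0, if_pos rfl]; ring
        · rw [if_neg (by tauto), if_neg h0, if_neg h1]; ring
    rw [Finset.sum_congr rfl pw, Finset.sum_sub_distrib, Finset.sum_sub_distrib,
      Finset.sum_ite_eq' (Finset.range (m+1)) 0 (fun k => V k^2),
      Finset.sum_ite_eq' (Finset.range (m+1)) m (fun k => V k^2),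
      if_pos (Finset.mem_range.mpr (by omega)), if_pos (Finset.mem_range.mpr (by omega)),
      ← Finset.mul_sum, ← hT]
  have h2 : ∑ k ∈ Finset.range (m+1), V k * V (k+1) = P := by
    rw [Finset.sum_range_succ, hVm1, mul_zero, add_zero, hP]
  have h3 : ∑ k ∈ Finset.range (m+1), V k * (if 0 < k then V (k-1) else 0) = P := by
    rw [Finset.sum_range_succ']
    have e0 : (if (0:ℕ) < 0 then V (0-1) else 0) = 0 := if_neg (lt_irrefl 0)
    have ek : ∀ k : ℕ, (if 0 < k+1 then V (k+1-1) else 0) = V k := fun k => by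
      rw [if_pos (Nat.succ_pos k), Nat.succ_sub_one]
    simp only [e0, ek, mul_zero, add_zero]
    rw [hP]
    exact Finset.sum_congr rfl (fun k _ => mul_comm _ _)
  have h4 : ∑ k ∈ Finset.range m, V k^2 = T - V m^2 := by
    rw [hT, Finset.sum_range_succ]; ring
  have h5 : ∑ k ∈ Finset.range m, V (k+1)^2 = T - V 0^2 := by
    rw [hT, Finset.sum_range_succ']; ring
  have hRHS : ∑ k ∈ Finset.range m, (V k - V (k+1))^2
      = (T - V m^2) + (T - V 0^2) - 2*P := by
    have pw : ∀ k ∈ Finset.range m, (V k - V (k+1))^2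
        = V k^2 + V (k+1)^2 - 2*(V k * V (k+1)) := by intro k _; ring
    rw [Finset.sum_congr rfl pw]
    rw [Finset.sum_sub_distrib, Finset.sum_add_distrib, h4, h5, ← Finset.mul_sum, ← hP]
  have hLHS : ∑ k ∈ Finset.range (m+1),
      (V k * ((if k = 0 ∨ k = m then 1 else 2) * V k - V (k+1)
          - (if 0 < k then V (k-1) else 0)))
      = (2*T - V 0^2 - V m^2) - P - P := by
    have pw : ∀ k ∈ Finset.range (m+1),
        (V k * ((if k = 0 ∨ k = m then 1 else 2) * V k - V (k+1)
          - (if 0 < k then V (k-1) else 0)))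
        = (if k=0 ∨ k=m then (1:ℝ) else 2) * V k^2 - V k * V (k+1)
          - V k * (if 0 < k then V (k-1) else 0) := by intro k _; ring
    rw [Finset.sum_congr rfl pw, Finset.sum_sub_distrib, Finset.sum_sub_distrib, h1, h2, h3]
  rw [hLHS, hRHS]; ring

noncomputable def Mn (n : ℕ) : Matrix (Fin n) (Fin n) ℝ :=
  ((n:ℝ)^2)⁻¹ • (1 : Matrix (Fin n) (Fin n) ℝ) + triA n

lemma triA_transpose (n : ℕ) : (triA n)ᵀ = triA n := by
  ext i j
  simp only [transpose_apply, triA, Matrix.of_apply, Fin.ext_iff]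
  split_ifs <;> first | rfl | omega | (exfalso; omega)

lemma Mn_transpose (n : ℕ) : (Mn n)ᵀ = Mn n := by
  rw [Mn, transpose_add, transpose_smul, transpose_one, triA_transpose]

lemma Mn_mulVec {n : ℕ} (v : Fin n → ℝ) (j : Fin n) :
    (Mn n *ᵥ v) j = ((n:ℝ)^2)⁻¹ * v j + (triA n *ᵥ v) j := by
  rw [Mn, add_mulVec, smul_mulVec, one_mulVec]
  simp

lemma Mn_quad {n : ℕ} (hn : 2 ≤ n) (v : Fin n → ℝ) :
    v ⬝ᵥ (Mn n *ᵥ v) =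
      (∑ i : Fin n, (if h : (i:ℕ)+1 < n then (v i - v ⟨(i:ℕ)+1, h⟩)^2 else 0))
      + ((n:ℝ)^2)⁻¹ * ∑ i : Fin n, (v i)^2 := by
  rw [Mn, add_mulVec, smul_mulVec, one_mulVec, dotProduct_add, dotProduct_smul,
    triA_quadform hn]
  have : v ⬝ᵥ v = ∑ i : Fin n, (v i)^2 := by
    rw [dotProduct]; exact Finset.sum_congr rfl (fun i _ => (sq (v i)).symm)
  rw [smul_eq_mul, this]
  ring

lemma Mn_quad_nonneg {n : ℕ} (hn : 2 ≤ n) (v : Fin n → ℝ) :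
    0 ≤ v ⬝ᵥ (Mn n *ᵥ v) := by
  rw [Mn_quad hn]
  have h1 : 0 ≤ ∑ i : Fin n, (if h : (i:ℕ)+1 < n then (v i - v ⟨(i:ℕ)+1, h⟩)^2 else 0) :=
    Finset.sum_nonneg (fun i _ => by split_ifs; exacts [sq_nonneg _, le_refl 0])
  have h2 : 0 ≤ ((n:ℝ)^2)⁻¹ * ∑ i : Fin n, (v i)^2 :=
    mul_nonneg (by positivity) (Finset.sum_nonneg (fun i _ => sq_nonneg _))
  linarith

lemma Mn_posDef {n : ℕ} (hn : 2 ≤ n) : (Mn n).PosDef := by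
  refine Matrix.PosDef.of_dotProduct_mulVec_pos ?_ ?_
  · show (Mn n)ᴴ = Mn n
    rw [conjTranspose_eq_transpose_of_trivial, Mn_transpose]
  · intro v hv
    have : star v = v := by
      funext i; simp
    rw [this, Mn_quad hn]
    have h1 : 0 ≤ ∑ i : Fin n, (if h : (i:ℕ)+1 < n then (v i - v ⟨(i:ℕ)+1, h⟩)^2 else 0) :=
      Finset.sum_nonneg (fun i _ => by split_ifs; exacts [sq_nonneg _, le_refl 0])
    have h2 : 0 < ((n:ℝ)^2)⁻¹ * ∑ i : Fin n, (v i)^2 := by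
      apply mul_pos (by positivity)
      obtain ⟨i, hi⟩ := Function.ne_iff.mp hv
      apply Finset.sum_pos' (fun j _ => sq_nonneg _) ⟨i, Finset.mem_univ i, lt_of_le_of_ne (sq_nonneg _) (Ne.symm (pow_ne_zero 2 hi))⟩
    linarith

lemma Mn_det_isUnit {n : ℕ} (hn : 2 ≤ n) : IsUnit (Mn n).det :=
  (Mn_posDef hn).det_pos.ne'.isUnit

lemma Mn_mul_inv {n : ℕ} (hn : 2 ≤ n) : Mn n * (Mn n)⁻¹ = 1 :=
  Matrix.mul_nonsing_inv _ (Mn_det_isUnit hn)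

lemma Mn_inv_transpose {n : ℕ} : ((Mn n)⁻¹)ᵀ = (Mn n)⁻¹ := by
  rw [Matrix.transpose_nonsing_inv, Mn_transpose]

lemma Mn_inv_flip {n : ℕ} : ((Mn n)⁻¹).submatrix (Fin.rev : Fin n → Fin n) Fin.rev = (Mn n)⁻¹ := by
  have hA : (triA n).submatrix (Fin.rev : Fin n → Fin n) Fin.rev = triA n := by
    ext i j
    have hi := i.isLt
    have hj := j.isLt
    simp only [submatrix_apply, triA, Matrix.of_apply, Fin.ext_iff, Fin.val_rev]
    split_ifs <;> first | rfl | omega | (exfalso; omega)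
  have hM : (Mn n).submatrix (⇑(Fin.revPerm : Equiv.Perm (Fin n)))
      (⇑(Fin.revPerm : Equiv.Perm (Fin n))) = Mn n := by
    show (Mn n).submatrix (Fin.rev : Fin n → Fin n) Fin.rev = Mn n
    ext i j
    rw [submatrix_apply, Mn, Matrix.add_apply, Matrix.add_apply]
    have hAij : triA n (Fin.rev i) (Fin.rev j) = triA n i j := by
      have := congrFun (congrFun hA i) j
      simpa [submatrix_apply] using this
    rw [hAij]
    congr 1
    by_cases h : i = j
    · subst h; rw [Matrix.smul_apply, Matrix.smul_apply, one_apply_eq, one_apply_eq]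
    · rw [Matrix.smul_apply, Matrix.smul_apply, one_apply_ne (fun c => h (Fin.rev_injective c)),
        one_apply_ne h]
  have := Matrix.inv_submatrix_equiv (Mn n) (Fin.revPerm : Equiv.Perm (Fin n)) Fin.revPerm
  rw [hM] at this
  exact this.symm

lemma Mn_inv_col {n : ℕ} (hn : 2 ≤ n) (j : Fin n) :
    ((n:ℝ)^2)⁻¹ * (fun i => (Mn n)⁻¹ i ⟨0, by omega⟩) j
      + (triA n *ᵥ (fun i => (Mn n)⁻¹ i ⟨0, by omega⟩)) j
      = (if (j:ℕ) = 0 then 1 else 0) := by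
  set v : Fin n → ℝ := fun i => (Mn n)⁻¹ i ⟨0, by omega⟩ with hv
  have hve : v = (Mn n)⁻¹ *ᵥ Pi.single ⟨0, by omega⟩ 1 := by
    funext i; rw [mulVec_single]; simp [hv]
  have step1 : Mn n *ᵥ v = Pi.single ⟨0, by omega⟩ 1 := by
    rw [hve, mulVec_mulVec, Mn_mul_inv hn, one_mulVec]
  rw [← Mn_mulVec, step1]
  by_cases h : (j:ℕ) = 0
  · rw [if_pos h]
    have : j = ⟨0, by omega⟩ := Fin.ext h
    rw [this, Pi.single_eq_same]
  · rw [if_neg h]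
    exact Pi.single_eq_of_ne (fun c => h (congrArg Fin.val c)) 1

lemma Mn_inv_col_nonneg {n : ℕ} (hn : 2 ≤ n) (i : Fin n) :
    0 ≤ (Mn n)⁻¹ i ⟨0, by omega⟩ := by
  set v : Fin n → ℝ := fun i => (Mn n)⁻¹ i ⟨0, by omega⟩ with hv
  show 0 ≤ v i
  obtain ⟨k, -, hk⟩ := Finset.exists_min_image Finset.univ v ⟨⟨0, by omega⟩, Finset.mem_univ _⟩
  have hk' : ∀ i : Fin n, v k ≤ v i := fun i => hk i (Finset.mem_univ i)
  suffices hsuff : 0 ≤ v k from le_trans hsuff (hk' i)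
  have hα : (0:ℝ) < ((n:ℝ)^2)⁻¹ := by positivity
  have hkl := k.isLt
  have hk0 := Mn_inv_col hn k
  rw [triA_mulVec] at hk0
  have hRHS : (0:ℝ) ≤ (if (k:ℕ) = 0 then 1 else 0) := by
    split_ifs <;> norm_num
  suffices hs : 0 ≤ ((n:ℝ)^2)⁻¹ * v k by
    by_contra hneg
    push_neg at hneg
    have : ((n:ℝ)^2)⁻¹ * v k < 0 := mul_neg_of_pos_of_neg hα hneg
    linarith
  by_cases h0 : (k:ℕ) = 0
  · rw [if_pos (Or.inl h0), dif_pos (show (k:ℕ)+1 < n by omega), dif_neg (by omega)] at hk0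
    have h1 := hk' ⟨(k:ℕ)+1, by omega⟩
    linarith
  · by_cases hl : (k:ℕ) = n-1
    · rw [if_pos (Or.inr hl), dif_neg (by omega), dif_pos (show 0 < (k:ℕ) by omega)] at hk0
      have h1 := hk' ⟨(k:ℕ)-1, by omega⟩
      linarith
    · rw [if_neg (by tauto), dif_pos (show (k:ℕ)+1 < n by omega),
        dif_pos (show 0 < (k:ℕ) by omega)] at hk0
      have h1 := hk' ⟨(k:ℕ)+1, by omega⟩
      have h2 := hk' ⟨(k:ℕ)-1, by omega⟩
      linarith

lemma Mn_inv_bottom_pos {n : ℕ} (hn : 2 ≤ n) :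
    0 < (Mn n)⁻¹ ⟨n-1, by omega⟩ ⟨0, by omega⟩ := by
  set v : Fin n → ℝ := fun i => (Mn n)⁻¹ i ⟨0, by omega⟩ with hv
  have hvp : ∀ (i : Fin n) (h : (i:ℕ) < n), (Mn n)⁻¹ ⟨(i:ℕ), h⟩ ⟨0, by omega⟩ = v i := by
    intro i h; rw [hv]
  show 0 < v ⟨n-1, by omega⟩
  have hnn : ∀ i : Fin n, 0 ≤ v i := fun i => Mn_inv_col_nonneg hn i
  rcases lt_or_eq_of_le (hnn ⟨n-1, by omega⟩) with h | h
  · exact h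
  exfalso
  have hvtop : v ⟨n-1, by omega⟩ = 0 := h.symm
  have hα : (0:ℝ) < ((n:ℝ)^2)⁻¹ := by positivity
  have key : ∀ (a : ℕ) (ha : a < n),
      ((n:ℝ)^2)⁻¹ * v ⟨a, ha⟩ + ((if a = 0 ∨ a = n-1 then (1:ℝ) else 2) * v ⟨a, ha⟩
        - (if h : a+1 < n then v ⟨a+1, h⟩ else 0)
        - (if h : 0 < a then v ⟨a-1, by omega⟩ else 0))
      = (if a = 0 then 1 else 0) := by
    intro a ha
    have hk0 := Mn_inv_col hn ⟨a, ha⟩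
    rw [triA_mulVec] at hk0
    exact hk0
  have Q : ∀ k : ℕ, k + 1 ≤ n - 1 →
      v ⟨n-1-k, by omega⟩ = 0 ∧ v ⟨n-1-(k+1), by omega⟩ = 0 := by
    intro k
    induction k with
    | zero =>
      intro _
      refine ⟨hvtop, ?_⟩
      have hk0 := key (n-1) (by omega)
      rw [if_pos (Or.inr rfl), dif_neg (by omega), dif_pos (show 0 < n-1 by omega),
        if_neg (by omega)] at hk0
      have e1 : v ⟨n-1-(0+1), by omega⟩ = v ⟨n-1-1, by omega⟩ :=
        congrArg v (Fin.ext (show n-1-(0+1) = n-1-1 by omega))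
      rw [e1]
      rw [hvtop] at hk0
      linarith [hk0]
    | succ k ih =>
      intro hk1
      obtain ⟨h1, h2⟩ := ih (by omega)
      refine ⟨h2, ?_⟩
      have hk0 := key (n-1-(k+1)) (by omega)
      rw [if_neg (by omega), dif_pos (show (n-1-(k+1):ℕ)+1 < n by omega),
        dif_pos (show 0 < (n-1-(k+1):ℕ) by omega)] at hk0
      rw [if_neg (by omega)] at hk0
      have e1 : v ⟨(n-1-(k+1):ℕ)+1, by omega⟩ = v ⟨n-1-k, by omega⟩ :=
        congrArg v (Fin.ext (show n-1-(k+1)+1 = n-1-k by omega))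
      have e2 : v ⟨(n-1-(k+1):ℕ)-1, by omega⟩ = v ⟨n-1-(k+1+1), by omega⟩ :=
        congrArg v (Fin.ext (show n-1-(k+1)-1 = n-1-(k+1+1) by omega))
      rw [e1, e2, h1, h2] at hk0
      linarith [hk0]
  have hQ := Q (n-2) (by omega)
  have h1 : v ⟨1, by omega⟩ = 0 := by
    have := hQ.1
    rwa [show (⟨n-1-(n-2), by omega⟩ : Fin n) = ⟨1, by omega⟩ from Fin.ext (show n-1-(n-2) = 1 by omega)] at this
  have h0 : v ⟨0, by omega⟩ = 0 := by
    have := hQ.2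
    rwa [show (⟨n-1-(n-2+1), by omega⟩ : Fin n) = ⟨0, by omega⟩ from Fin.ext (show n-1-(n-2+1) = 0 by omega)] at this
  have hk0 := key 0 (by omega)
  rw [if_pos (Or.inl rfl), dif_pos (show (0:ℕ)+1 < n by omega), dif_neg (by omega),
    if_pos rfl] at hk0
  have e1 : v ⟨(0:ℕ)+1, by omega⟩ = v ⟨1, by omega⟩ := congrArg v (Fin.ext (show 0+1 = 1 by omega))
  rw [e1, h0, h1] at hk0
  norm_num at hk0

lemma Mn_inv_entry_symm {n : ℕ} (hn : 2 ≤ n) :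
    (Mn n)⁻¹ ⟨0, by omega⟩ ⟨n-1, by omega⟩ = (Mn n)⁻¹ ⟨n-1, by omega⟩ ⟨0, by omega⟩ := by
  conv_lhs => rw [← Mn_inv_transpose (n := n)]
  rw [transpose_apply]

lemma Mn_inv_corner {n : ℕ} (hn : 2 ≤ n) :
    (Mn n)⁻¹ ⟨n-1, by omega⟩ ⟨n-1, by omega⟩ = (Mn n)⁻¹ ⟨0, by omega⟩ ⟨0, by omega⟩ := by
  have hflip := Mn_inv_flip (n := n)
  have h0 : Fin.rev (⟨0, by omega⟩ : Fin n) = ⟨n-1, by omega⟩ := by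
    apply Fin.ext
    rw [Fin.val_rev]
  have := congrFun (congrFun hflip ⟨0, by omega⟩) ⟨0, by omega⟩
  rw [submatrix_apply, h0] at this
  exact this

noncomputable def bvec (n : ℕ) (hn : 0 < n) (C x z : ℝ) : Fin n → ℝ :=
  (Real.sqrt (C/n) * x) • (Pi.single (⟨0, hn⟩ : Fin n) (1:ℝ) : Fin n → ℝ)
  + (-(Real.sqrt (C/n) * z / 2)) • (Pi.single (⟨n-1, by omega⟩ : Fin n) (1:ℝ) : Fin n → ℝ)

lemma bvec_dot {n : ℕ} (hn : 0 < n) (C x z : ℝ) (w : Fin n → ℝ) :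
    bvec n hn C x z ⬝ᵥ w
      = Real.sqrt (C/n) * x * w ⟨0, hn⟩
        - Real.sqrt (C/n) * z / 2 * w ⟨n-1, by omega⟩ := by
  rw [bvec, add_dotProduct, smul_dotProduct, smul_dotProduct,
    single_dotProduct, single_dotProduct, smul_eq_mul, smul_eq_mul]
  ring

lemma hfun_eq {n : ℕ} (hn : 0 < n) (hn2 : 2 ≤ n) (C x z : ℝ) (y : Fin n → ℝ) :
    hfun n hn C x z y = -(1/2) * (y ⬝ᵥ (Mn n *ᵥ y)) + (bvec n hn C x z) ⬝ᵥ y := by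
  rw [hfun, Mn_quad hn2, bvec_dot]
  have hne : ((n:ℝ))^2 ≠ 0 := by positivity
  field_simp
  ring

lemma block {n : ℕ} (hn10 : 10 ≤ n) (hn : 0 < n) (a1 a2 C c1 c2 : ℝ)
    (ha1 : a1 = (Mn n)⁻¹ ⟨0, by omega⟩ ⟨0, by omega⟩ / n)
    (ha2 : a2 = (Mn n)⁻¹ ⟨n-1, by omega⟩ ⟨0, by omega⟩ / n)
    (hC : C = 12 / a2) (hc1 : c1 = C * (a2 - a1) / 2) (hc2 : c2 = C * (a2 - a1) / 8)
    (x z : ℝ) :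
    ∃ ystar : Fin n → ℝ,
      (∀ y : Fin n → ℝ, hfun n hn C x z y ≤ hfun n hn C x z ystar) ∧
      hfun n hn C x z ystar + (c1 * x^2 + c2 * z^2) = 6 * (x - (1/2) * z)^2 := by
  have hn2 : 2 ≤ n := by omega
  have hnR : (0:ℝ) < n := by exact_mod_cast hn
  set β1 : ℝ := (Mn n)⁻¹ ⟨0, by omega⟩ ⟨0, by omega⟩ with hβ1
  set β2 : ℝ := (Mn n)⁻¹ ⟨n-1, by omega⟩ ⟨0, by omega⟩ with hβ2
  have hβ2pos : 0 < β2 := Mn_inv_bottom_pos hn2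
  have ha2pos : 0 < a2 := by rw [ha2]; exact div_pos hβ2pos hnR
  have hCpos : 0 < C := by rw [hC]; exact div_pos (by norm_num) ha2pos
  have hCn : 0 ≤ C / n := le_of_lt (div_pos hCpos hnR)
  set s : ℝ := Real.sqrt (C/n) with hs
  have hs2 : s * s = C / n := Real.mul_self_sqrt hCn
  set b : Fin n → ℝ := bvec n hn C x z with hb
  set ystar : Fin n → ℝ := (Mn n)⁻¹ *ᵥ b with hystar
  have hMy : Mn n *ᵥ ystar = b := by
    rw [hystar, mulVec_mulVec, Mn_mul_inv hn2, one_mulVec]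
  have f2 : ∀ w : Fin n → ℝ, w ⬝ᵥ (Mn n *ᵥ ystar) = b ⬝ᵥ w := by
    intro w; rw [hMy, dotProduct_comm]
  have f3 : ∀ w : Fin n → ℝ, ystar ⬝ᵥ (Mn n *ᵥ w) = b ⬝ᵥ w := by
    intro w
    rw [dotProduct_mulVec, ← Mn_transpose, vecMul_transpose, hMy]
  refine ⟨ystar, ?_, ?_⟩
  · intro y
    rw [hfun_eq hn hn2, hfun_eq hn hn2, ← hb]
    have hw : 0 ≤ (y - ystar) ⬝ᵥ (Mn n *ᵥ (y - ystar)) := Mn_quad_nonneg hn2 _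
    have hexp : (y - ystar) ⬝ᵥ (Mn n *ᵥ (y - ystar))
        = y ⬝ᵥ (Mn n *ᵥ y) - 2 * (b ⬝ᵥ y) + b ⬝ᵥ ystar := by
      rw [mulVec_sub, dotProduct_sub, sub_dotProduct, sub_dotProduct, f2 y, f3 y, f3 ystar]
      ring
    have h3 := f3 ystar
    linarith
  · rw [hfun_eq hn hn2, ← hb]
    have h3 := f3 ystar
    -- value of b ⬝ᵥ ystar
    have hyscomp : ∀ i : Fin n, ystar i
        = (s * x) * (Mn n)⁻¹ i ⟨0, hn⟩ + (-(s * z / 2)) * (Mn n)⁻¹ i ⟨n-1, by omega⟩ := by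
      intro i
      rw [hystar, hb, bvec, mulVec_add, mulVec_smul, mulVec_smul, mulVec_single, mulVec_single]
      simp [hs]
    have hbdot : b ⬝ᵥ ystar = s * x * ystar ⟨0, hn⟩ - s * z / 2 * ystar ⟨n-1, by omega⟩ := by
      rw [hb, bvec_dot]
    have hentry1 : (Mn n)⁻¹ ⟨0, hn⟩ ⟨0, hn⟩ = β1 := rfl
    have hentry2 : (Mn n)⁻¹ (⟨n-1, by omega⟩ : Fin n) ⟨0, hn⟩ = β2 := rfl
    have hentry3 : (Mn n)⁻¹ (⟨0, hn⟩ : Fin n) ⟨n-1, by omega⟩ = β2 := Mn_inv_entry_symm hn2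
    have hentry4 : (Mn n)⁻¹ (⟨n-1, by omega⟩ : Fin n) ⟨n-1, by omega⟩ = β1 := Mn_inv_corner hn2
    have hval : b ⬝ᵥ ystar = (C/n) * (x^2*β1 - x*z*β2 + z^2/4*β1) := by
      rw [hbdot, hyscomp, hyscomp, hentry1, hentry2, hentry3, hentry4]
      linear_combination (x^2*β1 - x*z*β2 + z^2/4*β1) * hs2
    have hβ2ne : β2 ≠ 0 := ne_of_gt hβ2pos
    have hnne : (n:ℝ) ≠ 0 := ne_of_gt hnR
    rw [f3 ystar, hval, hc1, hc2, hC, ha1, ha2]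
    field_simp
    ring

/-- with `a₁ = B₁₁/n`, `a₂ = Bₙ₁/n`, `C = 12/a₂`, `c₁ = C(a₂-a₁)/2`,
`c₂ = C(a₂-a₁)/8`, the supremum of `f̄(x,z;·)` over `ȳ` is attained and equals
`f̄_m(x,z) = -Ψ(1)Φ(x₁) + Σᵢ[Ψ(-zᵢ)Φ(-xᵢ) - Ψ(zᵢ)Φ(xᵢ)] + 6Σᵢ(xᵢ - zᵢ₊₁/2)²`. -/
theorem stmt_7 (n T : ℕ) (hn : 10 ≤ n) (hT : 2 ≤ T)
    (a1 a2 C c1 c2 : ℝ)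
    (ha1 : a1 = Bmat n (((n : ℝ) ^ 2)⁻¹) ⟨0, by omega⟩ ⟨0, by omega⟩ / n)
    (ha2 : a2 = Bmat n (((n : ℝ) ^ 2)⁻¹) ⟨n - 1, by omega⟩ ⟨0, by omega⟩ / n)
    (hC : C = 12 / a2) (hc1 : c1 = C * (a2 - a1) / 2) (hc2 : c2 = C * (a2 - a1) / 8)
    (x : Fin T → ℝ) (z : Fin (T - 1) → ℝ) :
    ∃ ystar : Fin (T - 1) → Fin n → ℝ,
      (∀ ybar : Fin (T - 1) → Fin n → ℝ,
        fbar n T (by omega) hT C c1 c2 x z ybar ≤ fbar n T (by omega) hT C c1 c2 x z ystar) ∧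
      fbar n T (by omega) hT C c1 c2 x z ystar =
        -Psi 1 * Phi (x ⟨0, by omega⟩)
          + ∑ j : Fin (T - 1),
              (Psi (-z j) * Phi (-x ⟨(j : ℕ) + 1, by have := j.isLt; omega⟩)
                - Psi (z j) * Phi (x ⟨(j : ℕ) + 1, by have := j.isLt; omega⟩))
          + 6 * ∑ j : Fin (T - 1),
              (x ⟨(j : ℕ), by have := j.isLt; omega⟩ - (1 / 2) * z j) ^ 2 := by
  have hBM : Bmat n (((n : ℝ) ^ 2)⁻¹) = (Mn n)⁻¹ := rfl
  rw [hBM] at ha1 ha2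
  choose ys hle hval using fun j : Fin (T-1) =>
    block hn (by omega) a1 a2 C c1 c2 ha1 ha2 hC hc1 hc2
      (x ⟨(j:ℕ), by have := j.isLt; omega⟩) (z j)
  refine ⟨ys, ?_, ?_⟩
  · intro ybar
    simp only [fbar]
    apply add_le_add_left
    apply add_le_add_right
    exact Finset.sum_le_sum (fun j _ => hle j (ybar j))
  · simp only [fbar]
    rw [add_assoc]
    congr 1
    rw [← Finset.sum_add_distrib, Finset.mul_sum]
    exact Finset.sum_congr rfl (fun j _ => hval j)
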